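/- Let k ≥ 1 and r ≥ 2 be integers, and let G be the edge-colored graph with vertex set {v₁, v₂, …, v_{kr+1}} in which, for each i ∈ {1, …, kr+1} and each j ∈ {1, …, k}, the edge v_i v_{i+j} (subscripts taken modulo kr+1) receives color i. Then the rainbow girth of G equals r + 1, which equals ⌈(kr+1)/k⌉; in particular, v₁ v_{1+k} v_{1+2k} ⋯ v_{1+rk} v₁ is a shortest rainbow cycle of G. -/

import Mathlib

open SimpleGraph

namespace RainbowAux

variable {V : Type*} {G : SimpleGraph V}

lemma edge_mem_of_lt {u v : V} (w : G.Walk u v) : ∀ {i : ℕ}, i < w.length →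
    s(w.getVert i, w.getVert (i+1)) ∈ w.edges := by
  induction w with
  | nil => intro i hi; simp at hi
  | cons h p ih =>
    intro i hi
    cases i with
    | zero =>
      simp [Walk.getVert_zero, Walk.getVert_cons_succ, Walk.edges_cons]
    | succ n =>
      rw [Walk.getVert_cons_succ, Walk.getVert_cons_succ, Walk.edges_cons]
      exact List.mem_cons_of_mem _ (ih (by simpa using hi))

lemma support_getElem? {u v : V} (w : G.Walk u v) : ∀ {i : ℕ}, i ≤ w.length →
    w.support[i]? = some (w.getVert i) := by
  induction w with
  | nil =>
    intro i hi
    have : i = 0 := by simpa using hi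
    subst this; simp
  | cons h p ih =>
    intro i hi
    cases i with
    | zero => simp
    | succ n =>
      rw [Walk.getVert_cons_succ, Walk.support_cons]
      simpa using ih (by simpa using hi)

lemma cycle_getVert_inj {v : V} {w : G.Walk v v} (hc : w.IsCycle) {i j : ℕ}
    (hi1 : 1 ≤ i) (hi2 : i ≤ w.length) (hj1 : 1 ≤ j) (hj2 : j ≤ w.length)
    (h : w.getVert i = w.getVert j) : i = j := by
  obtain ⟨i, rfl⟩ := Nat.exists_eq_add_of_le hi1
  obtain ⟨j, rfl⟩ := Nat.exists_eq_add_of_le hj1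
  have hlen : w.support.tail.length = w.length := by
    have := w.length_support
    have : w.support.length = w.length + 1 := w.length_support
    rw [List.length_tail, this]; omega
  have hs := w.support_eq_cons
  have h1 : w.support.tail[i]? = some (w.getVert (1+i)) := by
    have := support_getElem? w (i := 1 + i) hi2
    rw [hs] at this
    simpa [Nat.add_comm 1 i] using this
  have h2 : w.support.tail[j]? = some (w.getVert (1+j)) := by
    have := support_getElem? w (i := 1 + j) hj2
    rw [hs] at this
    simpa [Nat.add_comm 1 j] using this
  have : i = j := by
    refine (List.getElem?_inj (by omega) hc.support_nodup).mp ?_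
    rw [h1, h2, h]
  omega

/-- A walk along a sequence of pairwise-adjacent vertices. -/
def walkOfFn (g : ℕ → V) : (b : ℕ) → (∀ i < b, G.Adj (g i) (g (i+1))) → G.Walk (g 0) (g b)
  | 0, _ => Walk.nil
  | (b+1), h => (walkOfFn g b (fun i hi => h i (by omega))).concat (h b (by omega))

@[simp] lemma walkOfFn_length (g : ℕ → V) (b : ℕ) (h : ∀ i < b, G.Adj (g i) (g (i+1))) :
    (walkOfFn g b h).length = b := by
  induction b with
  | zero => rfl
  | succ b ih => rw [walkOfFn, Walk.length_concat, ih]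

lemma walkOfFn_support (g : ℕ → V) (b : ℕ) (h : ∀ i < b, G.Adj (g i) (g (i+1))) :
    (walkOfFn g b h).support = (List.range (b+1)).map g := by
  induction b with
  | zero => simp [walkOfFn, List.range_succ]
  | succ b ih =>
    rw [walkOfFn, Walk.support_concat, ih, List.range_succ (n := b + 1)]
    simp

lemma walkOfFn_edges (g : ℕ → V) (b : ℕ) (h : ∀ i < b, G.Adj (g i) (g (i+1))) :
    (walkOfFn g b h).edges = (List.range b).map (fun i => s(g i, g (i+1))) := by
  induction b with
  | zero => simp [walkOfFn]
  | succ b ih =>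
    rw [walkOfFn, Walk.edges_concat, ih, List.range_succ (n := b)]
    simp

end RainbowAux


open RainbowAux in
lemma existence (k r : ℕ) (hk : 1 ≤ k) (hr : 2 ≤ r)
    (G : SimpleGraph (ZMod (k * r + 1)))
    (hG : ∀ u v : ZMod (k * r + 1),
      G.Adj u v ↔ u ≠ v ∧ ∃ j : ℕ, 1 ≤ j ∧ j ≤ k ∧
        (v = u + (j : ZMod (k * r + 1)) ∨ u = v + (j : ZMod (k * r + 1))))
    (c : Sym2 (ZMod (k * r + 1)) → ZMod (k * r + 1))
    (hc : ∀ (i : ZMod (k * r + 1)) (j : ℕ), 1 ≤ j → j ≤ k →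
      c s(i, i + (j : ZMod (k * r + 1))) = i) :
    ∃ w : G.Walk (1 : ZMod (k * r + 1)) 1,
      w.IsCycle ∧ (w.edges.map c).Nodup ∧ w.length = r + 1 ∧
      {v | v ∈ w.support} =
        {v : ZMod (k * r + 1) | ∃ t : ℕ, t ≤ r ∧ v = 1 + ((t * k : ℕ) : ZMod (k * r + 1))} := by
  haveI : NeZero (k * r + 1) := ⟨by omega⟩
  set g : ℕ → ZMod (k * r + 1) := fun t => 1 + ((t * k : ℕ) : ZMod (k * r + 1)) with hg
  -- injectivity of g on [0, r]
  have hval : ∀ t, t ≤ r → ((t * k : ℕ) : ZMod (k * r + 1)).val = t * k := by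
    intro t ht
    apply ZMod.val_cast_of_lt
    have : t * k ≤ r * k := Nat.mul_le_mul_right k ht
    calc t * k ≤ r * k := Nat.mul_le_mul_right k ht
      _ = k * r := Nat.mul_comm r k
      _ < k * r + 1 := by omega
  have hginj : ∀ t1, t1 ≤ r → ∀ t2, t2 ≤ r → g t1 = g t2 → t1 = t2 := by
    intro t1 h1 t2 h2 h
    have h' : ((t1 * k : ℕ) : ZMod (k * r + 1)) = ((t2 * k : ℕ) : ZMod (k * r + 1)) := by
      have := add_left_cancel h
      exact this
    have := congrArg ZMod.val h'
    rw [hval t1 h1, hval t2 h2] at this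
    exact Nat.eq_of_mul_eq_mul_right hk this
  -- the k-step identity
  have hstep : ∀ t, g (t + 1) = g t + ((k : ℕ) : ZMod (k * r + 1)) := by
    intro t
    show 1 + (((t+1) * k : ℕ) : ZMod (k * r + 1)) = 1 + ((t * k : ℕ) : ZMod (k * r + 1)) + ((k : ℕ) : ZMod (k * r + 1))
    push_cast
    ring
  have hlast : (1 : ZMod (k * r + 1)) = g r + ((1 : ℕ) : ZMod (k * r + 1)) := by
    show (1 : ZMod (k * r + 1)) = 1 + ((r * k : ℕ) : ZMod (k * r + 1)) + ((1 : ℕ) : ZMod (k * r + 1))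
    have : ((r * k : ℕ) : ZMod (k * r + 1)) + ((1 : ℕ) : ZMod (k * r + 1)) = ((r * k + 1 : ℕ) : ZMod (k * r + 1)) := by
      push_cast; ring
    rw [add_assoc, this]
    have hrk : (r * k + 1 : ℕ) = k * r + 1 := by ring
    rw [hrk, ZMod.natCast_self, add_zero]
  have hadj : ∀ i, i < r → G.Adj (g i) (g (i + 1)) := by
    intro i hi
    rw [hG]
    refine ⟨fun h => by have := hginj i (by omega) (i+1) (by omega) h; omega,
      k, hk, le_rfl, Or.inl (hstep i)⟩
  have hadjlast : G.Adj (g r) 1 := by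
    rw [hG]
    refine ⟨fun h => by have := hginj r le_rfl 0 (by omega) (h.trans (by simp [hg])); omega,
      1, le_rfl, hk, Or.inl hlast⟩
  have hg0 : g 0 = 1 := by simp [hg]
  set W0 : G.Walk (1 : ZMod (k * r + 1)) (g r) := (walkOfFn g r hadj).copy hg0 rfl with hW0
  set W : G.Walk (1 : ZMod (k * r + 1)) 1 := W0.concat hadjlast with hW
  have hWlen : W.length = r + 1 := by
    rw [hW, Walk.length_concat, hW0, Walk.length_copy, walkOfFn_length]
  have hWedges : W.edges = ((List.range r).map (fun i => s(g i, g (i+1)))) ++ [s(g r, 1)] := by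
    rw [hW, Walk.edges_concat, hW0, Walk.edges_copy, walkOfFn_edges, List.concat_eq_append]
  have hWsupp : W.support = (List.range (r+1)).map g ++ [1] := by
    rw [hW, Walk.support_concat, hW0, Walk.support_copy, walkOfFn_support]
  -- colors
  have hcol : W.edges.map c = (List.range (r+1)).map g := by
    rw [hWedges, List.map_append, List.range_succ, List.map_append, List.map_map]
    congr 1
    · apply List.map_congr_left
      intro i hi
      simp only [Function.comp_apply]
      rw [hstep i]
      exact hc (g i) k hk le_rfl
    · simp only [List.map_cons, List.map_nil]
      rw [hlast, hc (g r) 1 le_rfl hk]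
  have hrainbow : (W.edges.map c).Nodup := by
    rw [hcol]
    apply List.Nodup.map_on _ List.nodup_range
    intro x hx y hy hxy
    exact hginj x (by simpa using Nat.lt_succ_iff.mp (List.mem_range.mp hx)) y
      (by simpa using Nat.lt_succ_iff.mp (List.mem_range.mp hy)) hxy
  have hcyc : W.IsCycle := by
    constructor
    constructor
    · exact ⟨hrainbow.of_map⟩
    · intro h
      have := congrArg Walk.length h
      rw [hWlen] at this
      simp at this
    · -- support tail nodup
      have htail : W.support.tail = ((List.range r).map (fun i => g (i+1))) ++ [1] := by
        rw [hWsupp, List.range_succ_eq_map]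
        simp [List.map_map, Function.comp]
      rw [htail]
      rw [List.nodup_append]
      refine ⟨?_, List.nodup_singleton 1, ?_⟩
      · apply List.Nodup.map_on _ List.nodup_range
        intro x hx y hy hxy
        have := hginj (x+1) (by simpa using List.mem_range.mp hx) (y+1)
          (by simpa using List.mem_range.mp hy) hxy
        omega
      · intro a ha b hb hab
        simp only [List.mem_singleton] at hb
        subst hb
        subst hab
        simp only [List.mem_map, List.mem_range] at ha
        obtain ⟨i, hi, hgi⟩ := ha
        have := hginj (i+1) (by omega) 0 (by omega) (by rw [hgi, hg0])
        omega
  refine ⟨W, hcyc, hrainbow, hWlen, ?_⟩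
  ext x
  simp only [Set.mem_setOf_eq, hWsupp, List.mem_append, List.mem_map, List.mem_range,
    List.mem_singleton]
  constructor
  · rintro (⟨t, ht, rfl⟩ | rfl)
    · exact ⟨t, by omega, rfl⟩
    · exact ⟨0, by omega, by simp [hg]⟩
  · rintro ⟨t, ht, rfl⟩
    exact Or.inl ⟨t, by omega, rfl⟩


open RainbowAux in
lemma lower_bound (k r : ℕ) (hk : 1 ≤ k) (hr : 2 ≤ r)
    (G : SimpleGraph (ZMod (k * r + 1)))
    (hG : ∀ u v : ZMod (k * r + 1),
      G.Adj u v ↔ u ≠ v ∧ ∃ j : ℕ, 1 ≤ j ∧ j ≤ k ∧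
        (v = u + (j : ZMod (k * r + 1)) ∨ u = v + (j : ZMod (k * r + 1))))
    (c : Sym2 (ZMod (k * r + 1)) → ZMod (k * r + 1))
    (hc : ∀ (i : ZMod (k * r + 1)) (j : ℕ), 1 ≤ j → j ≤ k →
      c s(i, i + (j : ZMod (k * r + 1))) = i)
    (v : ZMod (k * r + 1)) (w : G.Walk v v) (hcyc : w.IsCycle)
    (hrain : (w.edges.map c).Nodup) (hlen : w.length ≤ r) : False := by
  haveI : NeZero (k * r + 1) := ⟨by omega⟩
  set ℓ := w.length with hℓdef
  have hℓ3 : 3 ≤ ℓ := hcyc.three_le_length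
  -- choose signed step sizes
  have hstep : ∀ t : ℕ, ∃ d : ℤ, t < ℓ →
      1 ≤ |d| ∧ |d| ≤ (k : ℤ) ∧ w.getVert (t+1) = w.getVert t + ((d : ℤ) : ZMod (k * r + 1)) := by
    intro t
    by_cases ht : t < ℓ
    · have hadj := w.adj_getVert_succ ht
      rw [hG] at hadj
      obtain ⟨hne, j, hj1, hj2, hcase⟩ := hadj
      rcases hcase with h | h
      · exact ⟨(j : ℤ), fun _ => ⟨by simpa using hj1, by simpa using hj2, by push_cast; exact h⟩⟩
      · refine ⟨-(j : ℤ), fun _ => ⟨by simpa using hj1, by simpa using hj2, ?_⟩⟩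
        push_cast
        rw [h]
        ring
    · exact ⟨0, fun h => absurd h ht⟩
  choose d hd using hstep
  set p : ℕ → ℤ := fun t => ∑ s ∈ Finset.range t, d s with hp
  have hp0 : p 0 = 0 := by simp [hp]
  have hpsucc : ∀ t, p (t+1) = p t + d t := by
    intro t; simp [hp, Finset.sum_range_succ]
  -- cast relation
  have hA : ∀ t, t ≤ ℓ → ((p t : ℤ) : ZMod (k * r + 1)) = w.getVert t - v := by
    intro t
    induction t with
    | zero => intro _; simp [hp0, w.getVert_zero]
    | succ t ih =>
      intro ht
      have ht' : t < ℓ := by omega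
      obtain ⟨_, _, hrel⟩ := hd t ht'
      rw [hpsucc]
      push_cast
      rw [ih (by omega), hrel]
      ring
  -- bound
  have hB : ∀ t, t ≤ ℓ → |p t| ≤ (k : ℤ) * t := by
    intro t ht
    calc |p t| ≤ ∑ s ∈ Finset.range t, |d s| := Finset.abs_sum_le_sum_abs _ _
      _ ≤ ∑ s ∈ Finset.range t, (k : ℤ) := by
          apply Finset.sum_le_sum
          intro s hs
          exact (hd s (by simp at hs; omega)).2.1
      _ = (k : ℤ) * t := by simp [mul_comm]
  -- closure
  have hclose : p ℓ = 0 := by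
    have h1 : ((p ℓ : ℤ) : ZMod (k * r + 1)) = 0 := by
      rw [hA ℓ le_rfl, hℓdef, w.getVert_length, sub_self]
    have h2 : ((k * r + 1 : ℕ) : ℤ) ∣ p ℓ := by
      exact_mod_cast (ZMod.intCast_zmod_eq_zero_iff_dvd _ _).mp h1
    apply Int.eq_zero_of_abs_lt_dvd h2
    calc |p ℓ| ≤ (k : ℤ) * ℓ := hB ℓ le_rfl
      _ ≤ (k : ℤ) * r := by
          apply mul_le_mul_of_nonneg_left (by exact_mod_cast hlen) (by positivity)
      _ < ((k * r + 1 : ℕ) : ℤ) := by push_cast; omega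
  -- minimum
  obtain ⟨a, ha, hmin⟩ := Finset.exists_min_image (Finset.range ℓ) p ⟨0, by simp; omega⟩
  rw [Finset.mem_range] at ha
  have hmin' : ∀ b, b < ℓ → p a ≤ p b := fun b hb => hmin b (Finset.mem_range.mpr hb)
  set b := if a = 0 then ℓ - 1 else a - 1 with hb
  have hbℓ : b < ℓ := by rw [hb]; split <;> omega
  have hpb1 : p (b+1) = p a := by
    rw [hb]; split
    · rename_i h; rw [h, hp0]; have : ℓ - 1 + 1 = ℓ := by omega
      rw [this, hclose]
    · rename_i h; congr 1; omega
  have hvb1 : w.getVert (b+1) = w.getVert a := by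
    rw [hb]; split
    · rename_i h
      have : ℓ - 1 + 1 = ℓ := by omega
      rw [this, h, hℓdef, w.getVert_length, w.getVert_zero]
    · rename_i h; congr 1; omega
  -- d a > 0
  obtain ⟨hda1, hda2, hdarel⟩ := hd a ha
  obtain ⟨hdb1, hdb2, hdbrel⟩ := hd b hbℓ
  have hpa1 : p a ≤ p (a+1) := by
    by_cases h : a + 1 < ℓ
    · exact hmin' _ h
    · have : a + 1 = ℓ := by omega
      rw [this, hclose, ← hp0]; exact hmin' 0 (by omega)
  have hdapos : 0 < d a := by
    have := hpsucc a
    have : d a = p (a+1) - p a := by omega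
    rcases lt_or_gt_of_ne (fun h : d a = 0 => by rw [h] at hda1; simp at hda1) with h | h
    · omega
    · exact h
  have hdbneg : d b < 0 := by
    have h1 := hpsucc b
    have h2 := hmin' b hbℓ
    have : d b = p (b+1) - p b := by omega
    rcases lt_or_gt_of_ne (fun h : d b = 0 => by rw [h] at hdb1; simp at hdb1) with h | h
    · exact h
    · rw [hpb1] at this; omega
  -- natural step sizes
  set j1 := (d a).toNat with hj1def
  set j2 := (-(d b)).toNat with hj2def
  have hj11 : 1 ≤ j1 := by omega
  have hj12 : j1 ≤ k := by
    have : |d a| = d a := abs_of_pos hdapos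
    omega
  have hj21 : 1 ≤ j2 := by omega
  have hj22 : j2 ≤ k := by
    have : |d b| = -(d b) := abs_of_neg hdbneg
    omega
  have hcast1 : ((j1 : ℕ) : ZMod (k * r + 1)) = ((d a : ℤ) : ZMod (k * r + 1)) := by
    rw [hj1def]
    rw [← Int.cast_natCast, Int.toNat_of_nonneg (le_of_lt hdapos)]
  have hcast2 : ((j2 : ℕ) : ZMod (k * r + 1)) = ((-(d b) : ℤ) : ZMod (k * r + 1)) := by
    rw [hj2def]
    rw [← Int.cast_natCast, Int.toNat_of_nonneg (by omega)]
  have hrel1 : w.getVert (a+1) = w.getVert a + ((j1 : ℕ) : ZMod (k * r + 1)) := by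
    rw [hcast1]; exact hdarel
  have hrel2 : w.getVert b = w.getVert a + ((j2 : ℕ) : ZMod (k * r + 1)) := by
    rw [hcast2, ← hvb1]
    rw [hdbrel]
    push_cast
    ring
  -- colors
  have hcol1 : c s(w.getVert a, w.getVert (a+1)) = w.getVert a := by
    rw [hrel1]; exact hc _ j1 hj11 hj12
  have hcol2 : c s(w.getVert b, w.getVert (b+1)) = w.getVert a := by
    rw [hvb1, Sym2.eq_swap, hrel2]
    exact hc _ j2 hj21 hj22
  -- both edges in the walk
  have hmem1 : s(w.getVert a, w.getVert (a+1)) ∈ w.edges := edge_mem_of_lt w ha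
  have hmem2 : s(w.getVert b, w.getVert (b+1)) ∈ w.edges := edge_mem_of_lt w hbℓ
  have heq : s(w.getVert a, w.getVert (a+1)) = s(w.getVert b, w.getVert (b+1)) :=
    List.inj_on_of_nodup_map hrain hmem1 hmem2 (hcol1.trans hcol2.symm)
  -- derive vertex equality
  have hj1ne : ((j1 : ℕ) : ZMod (k * r + 1)) ≠ 0 := by
    intro h
    have := congrArg ZMod.val h
    have hkn : k < k * r + 1 := by nlinarith
    rw [ZMod.val_cast_of_lt (by omega), ZMod.val_zero] at this
    omega
  have hne1 : w.getVert (a+1) ≠ w.getVert a := by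
    rw [hrel1]
    intro h
    apply hj1ne
    exact add_eq_left.mp h
  have hvab : w.getVert (a+1) = w.getVert b := by
    rw [hvb1, Sym2.eq_iff] at heq
    rcases heq with ⟨h1, h2⟩ | ⟨h1, h2⟩
    · exact absurd h2 hne1
    · exact h2
  -- index contradiction
  rcases Nat.eq_zero_or_pos a with ha0 | hapos
  · have hbval : b = ℓ - 1 := by rw [hb, if_pos ha0]
    rw [hbval, ha0] at hvab
    have := cycle_getVert_inj hcyc (i := 0 + 1) (j := ℓ - 1)
      (by omega) (by omega) (by omega) (by omega) hvab
    omega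
  · have hbval : b = a - 1 := by rw [hb, if_neg (by omega)]
    by_cases ha1 : a = 1
    · rw [hbval] at hvab
      have hvab2 : w.getVert 2 = w.getVert w.length := by
        have e1 : a + 1 = 2 := by omega
        have e2 : a - 1 = 0 := by omega
        rw [e1, e2] at hvab
        rw [hvab, w.getVert_zero, w.getVert_length]
      have := cycle_getVert_inj hcyc (i := 2) (j := w.length)
        (by omega) (by omega) (by omega) (by omega) hvab2
      omega
    · rw [hbval] at hvab
      have := cycle_getVert_inj hcyc (i := a + 1) (j := a - 1)
        (by omega) (by omega) (by omega) (by omega) hvab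
      omega


/-- The star construction: on vertex set `ZMod (k*r+1)` (for `k ≥ 1`, `r ≥ 2`),
join each vertex `i` to `i+1, …, i+k`, and color each edge `{i, i+j}`
(`1 ≤ j ≤ k`) with color `i`, so each color class is a star of size `k` centered
at a distinct vertex.  Then the rainbow girth of this edge-colored graph equals
`r + 1 = ⌈(kr+1)/k⌉`; in particular the cycle through `1, 1+k, 1+2k, …, 1+rk` is
a shortest rainbow cycle. -/
theorem statement14 (k r : ℕ) (hk : 1 ≤ k) (hr : 2 ≤ r)
    (G : SimpleGraph (ZMod (k * r + 1)))
    (hG : ∀ u v : ZMod (k * r + 1),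
      G.Adj u v ↔ u ≠ v ∧ ∃ j : ℕ, 1 ≤ j ∧ j ≤ k ∧
        (v = u + (j : ZMod (k * r + 1)) ∨ u = v + (j : ZMod (k * r + 1))))
    (c : Sym2 (ZMod (k * r + 1)) → ZMod (k * r + 1))
    (hc : ∀ (i : ZMod (k * r + 1)) (j : ℕ), 1 ≤ j → j ≤ k →
      c s(i, i + (j : ZMod (k * r + 1))) = i) :
    sInf {ℓ : ℕ | ∃ (v : ZMod (k * r + 1)) (w : G.Walk v v),
        w.IsCycle ∧ (w.edges.map c).Nodup ∧ w.length = ℓ} = r + 1 ∧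
    r + 1 = ⌈((k * r + 1 : ℕ) : ℝ) / (k : ℝ)⌉₊ ∧
    ∃ w : G.Walk (1 : ZMod (k * r + 1)) 1,
      w.IsCycle ∧ (w.edges.map c).Nodup ∧ w.length = r + 1 ∧
      {v | v ∈ w.support} =
        {v : ZMod (k * r + 1) | ∃ t : ℕ, t ≤ r ∧ v = 1 + ((t * k : ℕ) : ZMod (k * r + 1))} := by
  obtain ⟨w, hcyc, hrain, hlen, hsupp⟩ := existence k r hk hr G hG c hc
  have hmem : r + 1 ∈ {ℓ : ℕ | ∃ (v : ZMod (k * r + 1)) (w : G.Walk v v),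
      w.IsCycle ∧ (w.edges.map c).Nodup ∧ w.length = ℓ} := ⟨1, w, hcyc, hrain, hlen⟩
  refine ⟨?_, ?_, w, hcyc, hrain, hlen, hsupp⟩
  · apply le_antisymm (Nat.sInf_le hmem)
    apply le_csInf ⟨r + 1, hmem⟩
    rintro b ⟨v', w', hcyc', hrain', hlen'⟩
    by_contra h
    push_neg at h
    exact lower_bound k r hk hr G hG c hc v' w' hcyc' hrain' (by omega)
  · have hk' : (0 : ℝ) < (k : ℝ) := by exact_mod_cast hk
    have hk1 : (1 : ℝ) ≤ (k : ℝ) := by exact_mod_cast hk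
    symm
    rw [Nat.ceil_eq_iff (by omega)]
    constructor
    · rw [lt_div_iff₀ hk']
      push_cast
      nlinarith
    · rw [div_le_iff₀ hk']
      push_cast
      nlinarith
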